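/- Let q be a prime power and F = F_q(X). For k ≥ 0, the number of ordered n-tuples (A_1,...,A_n) of polynomials in F_q[X] with gcd(A_1,...,A_n) = 1 and max{deg A_1,...,deg A_n} = k equals (q-1)·N_{F^n}(k), i.e., q^{nk-n+1}(q^n-1)(q^{n-1}-1) if k ≥ 1 and q^n - 1 if k = 0. -/

import Mathlib

open Polynomial

set_option linter.unusedSectionVars false
set_option maxHeartbeats 1000000

section general

lemma aux_card_partition {α : Type*} (P : α → Prop) [Finite {a // P a}] (f : α → ℕ) (k : ℕ)
    (hb : ∀ a, P a → f a ≤ k) :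
    Nat.card {a // P a} = ∑ j ∈ Finset.range (k + 1), Nat.card {a // P a ∧ f a = j} := by
  classical
  letI : Fintype {a // P a} := Fintype.ofFinite _
  rw [Nat.card_eq_fintype_card, ← Finset.card_univ,
    Finset.card_eq_sum_card_fiberwise (f := fun b : {a // P a} => f b.1)
      (t := Finset.range (k + 1))
      (fun x _ => Finset.mem_range.mpr (Nat.lt_succ_of_le (hb x.1 x.2)))]
  refine Finset.sum_congr rfl fun j _ => ?_
  rw [← Fintype.card_subtype, ← Nat.card_eq_fintype_card]
  exact Nat.card_congr (Equiv.subtypeSubtypeEquivSubtypeInter P fun a => f a = j)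

lemma aux_card_split {α : Type*} (P Q : α → Prop) [Finite {a // P a}] :
    Nat.card {a // P a} = Nat.card {a // P a ∧ Q a} + Nat.card {a // P a ∧ ¬Q a} := by
  classical
  letI : Fintype {a // P a} := Fintype.ofFinite _
  rw [Nat.card_eq_fintype_card, ← Finset.card_univ,
    ← Finset.card_filter_add_card_filter_not (s := Finset.univ)
      (p := fun b : {a // P a} => Q b.1)]
  congr 1
  · rw [← Fintype.card_subtype, ← Nat.card_eq_fintype_card]
    exact Nat.card_congr (Equiv.subtypeSubtypeEquivSubtypeInter P fun a => Q a)
  · rw [← Fintype.card_subtype, ← Nat.card_eq_fintype_card]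
    exact Nat.card_congr (Equiv.subtypeSubtypeEquivSubtypeInter P fun a => ¬Q a)

lemma aux_withbot_add_eq {j k : ℕ} {s : WithBot ℕ}
    (h : (j : WithBot ℕ) + s = (k : WithBot ℕ)) :
    j ≤ k ∧ s = ((k - j : ℕ) : WithBot ℕ) := by
  cases s with
  | bot => simp at h
  | coe m =>
    simp only [Nat.cast_withBot, ← WithBot.coe_add, WithBot.coe_inj] at h ⊢
    exact ⟨by omega, by omega⟩

end general

section poly

variable {F : Type*} [Field F] [Fintype F] [DecidableEq F]

instance aux_fin_degLT (m : ℕ) : Finite (degreeLT F m) :=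
  Finite.of_equiv _ (degreeLTEquiv F m).toEquiv.symm

lemma aux_card_degLT (q m : ℕ) (hq : Fintype.card F = q) :
    Nat.card (degreeLT F m) = q ^ m := by
  rw [Nat.card_congr (degreeLTEquiv F m).toEquiv, Nat.card_fun]
  simp [Nat.card_eq_fintype_card, hq]

def auxBoxEquiv (n m : ℕ) :
    {A : Fin n → F[X] // ∀ i, (A i).degree < (m : ℕ)} ≃ (Fin n → degreeLT F m) where
  toFun := fun A i => ⟨A.1 i, mem_degreeLT.mpr (A.2 i)⟩
  invFun := fun B => ⟨fun i => B i, fun i => mem_degreeLT.mp (B i).2⟩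
  left_inv := fun _ => rfl
  right_inv := fun _ => rfl

instance aux_finite_box (n m : ℕ) :
    Finite {A : Fin n → F[X] // ∀ i, (A i).degree < (m : ℕ)} :=
  Finite.of_equiv _ (auxBoxEquiv n m).symm

lemma aux_card_box (q n m : ℕ) (hq : Fintype.card F = q) :
    Nat.card {A : Fin n → F[X] // ∀ i, (A i).degree < (m : ℕ)} = q ^ (n * m) := by
  rw [Nat.card_congr (auxBoxEquiv n m), Nat.card_fun, aux_card_degLT q m hq, ← pow_mul,
    mul_comm]
  simp [Nat.card_eq_fintype_card]

lemma aux_finite_of_deg_lt {n m : ℕ} (P : (Fin n → F[X]) → Prop)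
    (h : ∀ A, P A → ∀ i, (A i).degree < (m : ℕ)) : Finite {A // P A} :=
  Finite.of_injective
    (fun A => (⟨A.1, h A.1 A.2⟩ : {A : Fin n → F[X] // ∀ i, (A i).degree < (m : ℕ)}))
    fun _ _ hab => Subtype.ext (by simpa using congrArg Subtype.val hab)

/-- monic polynomials of degree `j` -/
noncomputable def auxMonicEquiv (j : ℕ) :
    {d : F[X] // d.Monic ∧ d.natDegree = j} ≃ (degreeLT F j) where
  toFun := fun d => ⟨d.1 - X ^ j, by
    rcases d with ⟨d, hd, hdeg⟩
    refine mem_degreeLT.mpr ?_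
    have h1 : d.degree = (j : WithBot ℕ) := by
      rw [← hdeg]; exact degree_eq_natDegree hd.ne_zero
    have h2 : (X ^ j : F[X]).degree = (j : WithBot ℕ) := degree_X_pow j
    have := degree_sub_lt (h1.trans h2.symm) hd.ne_zero
      (by rw [hd.leadingCoeff, (monic_X_pow j).leadingCoeff])
    simpa [h1] using this⟩
  invFun := fun p => ⟨X ^ j + p.1, by
    have hp : p.1.degree < (j : WithBot ℕ) := mem_degreeLT.mp p.2
    have hdeg : (X ^ j + p.1).degree = (j : WithBot ℕ) := by
      rw [degree_add_eq_left_of_degree_lt (by simpa using hp)]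
      exact degree_X_pow j
    constructor
    · rw [Monic, leadingCoeff, natDegree_eq_of_degree_eq_some hdeg]
      simp [coeff_X_pow, coeff_eq_zero_of_degree_lt hp]
    · exact natDegree_eq_of_degree_eq_some hdeg⟩
  left_inv := fun d => by simp
  right_inv := fun p => by simp

instance aux_finite_monic (j : ℕ) : Finite {d : F[X] // d.Monic ∧ d.natDegree = j} :=
  Finite.of_equiv _ (auxMonicEquiv j).symm

lemma aux_card_monic (q j : ℕ) (hq : Fintype.card F = q) :
    Nat.card {d : F[X] // d.Monic ∧ d.natDegree = j} = q ^ j := by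
  rw [Nat.card_congr (auxMonicEquiv j), aux_card_degLT q j hq]

lemma aux_sup_deg_const_mul {n : ℕ} (hn : (Finset.univ : Finset (Fin n)).Nonempty)
    (d : F[X]) (B : Fin n → F[X]) :
    (Finset.univ.sup fun i => (d * B i).degree)
      = d.degree + Finset.univ.sup fun i => (B i).degree := by
  rw [← Finset.sup'_eq_sup hn, ← Finset.sup'_eq_sup hn]
  have hg : ∀ x y : WithBot ℕ, d.degree + (x ⊔ y) = (d.degree + x) ⊔ (d.degree + y) := by
    intro x y
    rcases le_total x y with h | h
    · rw [sup_eq_right.mpr h, sup_eq_right.mpr (by gcongr)]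
    · rw [sup_eq_left.mpr h, sup_eq_left.mpr (by gcongr)]
  have := (Finset.comp_sup'_eq_sup'_comp hn (fun x => d.degree + x) hg
    (f := fun i => (B i).degree)).symm
  simpa [Function.comp, degree_mul] using this

lemma aux_cop_iff_gcd_eq_one {n : ℕ} (A : Fin n → F[X]) :
    (∀ d : F[X], (∀ i, d ∣ A i) → IsUnit d) ↔ Finset.univ.gcd A = 1 := by
  constructor
  · intro h
    have hu : IsUnit (Finset.univ.gcd A) :=
      h _ (fun i => Finset.gcd_dvd (Finset.mem_univ i))
    rw [← Finset.normalize_gcd, normalize_eq_one]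
    exact hu
  · intro h d hd
    exact isUnit_of_dvd_one (h ▸ Finset.dvd_gcd fun i _ => hd i)

lemma aux_exists_ne_zero_of_sdeg {n k : ℕ} (hn : 0 < n) (A : Fin n → F[X])
    (hA : (Finset.univ.sup fun i => (A i).degree) = (k : WithBot ℕ)) : ∃ i, A i ≠ 0 := by
  obtain ⟨i, -, hi⟩ := Finset.exists_mem_eq_sup Finset.univ
    (Finset.univ_nonempty_iff.mpr ⟨⟨0, hn⟩⟩) (fun i => (A i).degree)
  exact ⟨i, fun h0 => by simp [h0, hA] at hi⟩

lemma aux_gcd_ne_zero_of_sdeg {n k : ℕ} (hn : 0 < n) (A : Fin n → F[X])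
    (hA : (Finset.univ.sup fun i => (A i).degree) = (k : WithBot ℕ)) :
    Finset.univ.gcd A ≠ 0 := by
  rw [Ne, Finset.gcd_eq_zero_iff]
  push_neg
  obtain ⟨i, hi⟩ := aux_exists_ne_zero_of_sdeg hn A hA
  exact ⟨i, Finset.mem_univ i, hi⟩

/-- The decomposition `A = gcd · B`. -/
noncomputable def auxGcdEquiv (n k : ℕ) (hn : 0 < n) :
    {A : Fin n → F[X] // (Finset.univ.sup fun i => (A i).degree) = (k : WithBot ℕ)} ≃
    {x : F[X] × (Fin n → F[X]) // x.1.Monic ∧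
      (∀ d : F[X], (∀ i, d ∣ x.2 i) → IsUnit d) ∧
      x.1.degree + (Finset.univ.sup fun i => (x.2 i).degree) = (k : WithBot ℕ)} where
  toFun A := by
    refine ⟨(Finset.univ.gcd A.1, fun i => A.1 i / Finset.univ.gcd A.1), ?_, ?_, ?_⟩
    · have := monic_normalize (aux_gcd_ne_zero_of_sdeg hn A.1 A.2)
      rwa [Finset.normalize_gcd] at this
    · obtain ⟨i, hi⟩ := aux_exists_ne_zero_of_sdeg hn A.1 A.2
      exact (aux_cop_iff_gcd_eq_one _).mpr (Finset.gcd_div_eq_one (Finset.mem_univ i) hi)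
    · have heq : ∀ i, Finset.univ.gcd A.1 * (A.1 i / Finset.univ.gcd A.1) = A.1 i :=
        fun i => EuclideanDomain.mul_div_cancel' (aux_gcd_ne_zero_of_sdeg hn A.1 A.2)
          (Finset.gcd_dvd (Finset.mem_univ i))
      dsimp only
      have h3 : (Finset.univ.sup fun i => (A.1 i).degree)
          = (Finset.univ.gcd A.1).degree
            + Finset.univ.sup fun i => (A.1 i / Finset.univ.gcd A.1).degree := by
        rw [← aux_sup_deg_const_mul (Finset.univ_nonempty_iff.mpr ⟨⟨0, hn⟩⟩)]
        exact (Finset.sup_congr rfl fun i _ => by rw [heq i]).symm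
      exact h3 ▸ A.2
  invFun x := ⟨fun i => x.1.1 * x.1.2 i, by
    rw [aux_sup_deg_const_mul (Finset.univ_nonempty_iff.mpr ⟨⟨0, hn⟩⟩)]
    exact x.2.2.2⟩
  left_inv A := by
    refine Subtype.ext (funext fun i => ?_)
    show Finset.univ.gcd A.1 * (A.1 i / Finset.univ.gcd A.1) = A.1 i
    exact EuclideanDomain.mul_div_cancel' (aux_gcd_ne_zero_of_sdeg hn A.1 A.2)
      (Finset.gcd_dvd (Finset.mem_univ i))
  right_inv x := by
    obtain ⟨⟨d, B⟩, hm, hc, hs⟩ := x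
    have hgcd : Finset.univ.gcd (fun i => d * B i) = d := by
      rw [Finset.gcd_mul_left, (aux_cop_iff_gcd_eq_one B).mp hc, mul_one, hm.normalize_eq_self]
    apply Subtype.ext
    dsimp only
    refine Prod.ext hgcd (funext fun i => ?_)
    show d * B i / Finset.univ.gcd (fun i => d * B i) = B i
    rw [hgcd]
    exact mul_div_cancel_left₀ (B i) hm.ne_zero

/-- fiber equiv -/
def auxFiberEquiv (n k j : ℕ) (hj : j ≤ k) :
    {x : F[X] × (Fin n → F[X]) // (x.1.Monic ∧
      (∀ d : F[X], (∀ i, d ∣ x.2 i) → IsUnit d) ∧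
      x.1.degree + (Finset.univ.sup fun i => (x.2 i).degree) = (k : WithBot ℕ)) ∧
      x.1.natDegree = j} ≃
    {d : F[X] // d.Monic ∧ d.natDegree = j} ×
      {B : Fin n → F[X] // (∀ d : F[X], (∀ i, d ∣ B i) → IsUnit d) ∧
        (Finset.univ.sup fun i => (B i).degree) = ((k - j : ℕ) : WithBot ℕ)} where
  toFun x := ⟨⟨x.1.1, x.2.1.1, x.2.2⟩, ⟨x.1.2, x.2.1.2.1, by
    have hs := x.2.1.2.2
    rw [degree_eq_natDegree x.2.1.1.ne_zero, x.2.2] at hs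
    exact (aux_withbot_add_eq hs).2⟩⟩
  invFun y := ⟨(y.1.1, y.2.1), ⟨y.1.2.1, y.2.2.1, by
    rw [degree_eq_natDegree y.1.2.1.ne_zero, y.1.2.2, y.2.2.2, ← Nat.cast_add,
      Nat.cast_inj]
    omega⟩, y.1.2.2⟩
  left_inv _ := rfl
  right_inv _ := rfl

lemma aux_finite_sdeg {n k : ℕ} :
    Finite {A : Fin n → F[X] // (Finset.univ.sup fun i => (A i).degree) = (k : WithBot ℕ)} := by
  refine aux_finite_of_deg_lt (m := k + 1) _ (fun A hA i => ?_)
  calc (A i).degree ≤ _ := Finset.le_sup (f := fun i => (A i).degree) (Finset.mem_univ i)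
    _ = (k : WithBot ℕ) := hA
    _ < ((k + 1 : ℕ) : WithBot ℕ) := by exact_mod_cast Nat.lt_succ_self k

lemma aux_card_sdeg_eq (q n k : ℕ) (hq : Fintype.card F = q) :
    Nat.card {A : Fin n → F[X] // (Finset.univ.sup fun i => (A i).degree) = (k : WithBot ℕ)}
      = q ^ (n * (k + 1)) - q ^ (n * k) := by
  have hsplit := aux_card_split
    (fun A : Fin n → F[X] => ∀ i, (A i).degree < ((k + 1 : ℕ) : WithBot ℕ))
    (fun A => (Finset.univ.sup fun i => (A i).degree) = (k : WithBot ℕ))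
  rw [aux_card_box q n (k + 1) hq] at hsplit
  have hcast : ((k : ℕ) : WithBot ℕ) < ((k + 1 : ℕ) : WithBot ℕ) := by
    exact_mod_cast Nat.lt_succ_self k
  have e_a : {A : Fin n → F[X] // (∀ i, (A i).degree < ((k + 1 : ℕ) : WithBot ℕ)) ∧
      (Finset.univ.sup fun i => (A i).degree) = (k : WithBot ℕ)} ≃
      {A : Fin n → F[X] // (Finset.univ.sup fun i => (A i).degree) = (k : WithBot ℕ)} := by
    refine Equiv.subtypeEquivRight fun A => ?_
    refine ⟨fun h => h.2, fun h => ⟨fun i => ?_, h⟩⟩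
    calc (A i).degree ≤ _ := Finset.le_sup (f := fun i => (A i).degree) (Finset.mem_univ i)
      _ = (k : WithBot ℕ) := h
      _ < _ := hcast
  have e_b : {A : Fin n → F[X] // (∀ i, (A i).degree < ((k + 1 : ℕ) : WithBot ℕ)) ∧
      ¬(Finset.univ.sup fun i => (A i).degree) = (k : WithBot ℕ)} ≃
      {A : Fin n → F[X] // ∀ i, (A i).degree < ((k : ℕ) : WithBot ℕ)} := by
    refine Equiv.subtypeEquivRight fun A => ?_
    constructor
    · rintro ⟨h1, h2⟩ i
      have hsup : (Finset.univ.sup fun i => (A i).degree) < ((k + 1 : ℕ) : WithBot ℕ) :=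
        (Finset.sup_lt_iff (WithBot.bot_lt_coe _)).mpr fun i _ => h1 i
      have hlt : (Finset.univ.sup fun i => (A i).degree) < ((k : ℕ) : WithBot ℕ) := by
        rcases hk : (Finset.univ.sup fun i => (A i).degree) with _ | m
        · exact WithBot.bot_lt_coe _
        · rw [hk, Nat.cast_withBot] at hsup h2
          rw [Nat.cast_withBot]
          rw [WithBot.some_eq_coe] at hsup h2
          have hm : m < k + 1 := WithBot.coe_lt_coe.mp hsup
          have hm2 : m ≠ k := fun h => h2 (by rw [h])
          exact WithBot.coe_lt_coe.mpr (lt_of_le_of_ne (Nat.lt_succ_iff.mp hm) hm2)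
      exact (Finset.le_sup (f := fun i => (A i).degree)
        (Finset.mem_univ i)).trans_lt hlt
    · intro h
      have hsup : (Finset.univ.sup fun i => (A i).degree) < ((k : ℕ) : WithBot ℕ) :=
        (Finset.sup_lt_iff (WithBot.bot_lt_coe _)).mpr fun i _ => h i
      exact ⟨fun i => (h i).trans hcast,
        fun he => absurd he (by rw [he] at hsup; exact absurd hsup (lt_irrefl _))⟩
  rw [Nat.card_congr e_a, Nat.card_congr e_b, aux_card_box q n k hq] at hsplit
  rw [hsplit, Nat.add_sub_cancel]

lemma aux_recur (q n : ℕ) (hq : Fintype.card F = q) (hn : 0 < n) (k : ℕ) :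
    q ^ (n * (k + 1)) - q ^ (n * k)
      = ∑ j ∈ Finset.range (k + 1), q ^ j *
        Nat.card {B : Fin n → F[X] // (∀ d : F[X], (∀ i, d ∣ B i) → IsUnit d) ∧
          (Finset.univ.sup fun i => (B i).degree) = ((k - j : ℕ) : WithBot ℕ)} := by
  rw [← aux_card_sdeg_eq q n k hq]
  haveI : Finite {A : Fin n → F[X] //
      (Finset.univ.sup fun i => (A i).degree) = (k : WithBot ℕ)} := aux_finite_sdeg
  rw [Nat.card_congr (auxGcdEquiv n k hn)]
  haveI : Finite {x : F[X] × (Fin n → F[X]) // x.1.Monic ∧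
      (∀ d : F[X], (∀ i, d ∣ x.2 i) → IsUnit d) ∧
      x.1.degree + (Finset.univ.sup fun i => (x.2 i).degree) = (k : WithBot ℕ)} :=
    Finite.of_equiv _ (auxGcdEquiv n k hn)
  rw [aux_card_partition _ (fun x => x.1.natDegree) k ?hb]
  case hb =>
    rintro ⟨d, B⟩ ⟨hm, -, hs⟩
    rw [degree_eq_natDegree hm.ne_zero] at hs
    exact (aux_withbot_add_eq hs).1
  refine Finset.sum_congr rfl fun j hj => ?_
  rw [Nat.card_congr (auxFiberEquiv n k j (Nat.lt_succ_iff.mp (Finset.mem_range.mp hj))),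
    Nat.card_prod, aux_card_monic q j hq]

end poly

/-- The target count. -/
def auxTarget (q n : ℕ) : ℕ → ℕ
  | 0 => q ^ n - 1
  | (k + 1) => q ^ (n * k + 1) * ((q ^ n - 1) * (q ^ (n - 1) - 1))

lemma aux_sum_target (q n : ℕ) (hq2 : 2 ≤ q) (hn : 2 ≤ n) (k : ℕ) :
    ∑ j ∈ Finset.range (k + 1), q ^ j * auxTarget q n (k - j)
      = q ^ (n * (k + 1)) - q ^ (n * k) := by
  obtain ⟨m, rfl⟩ : ∃ m, n = m + 2 := ⟨n - 2, by omega⟩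
  induction k with
  | zero => simp [auxTarget]
  | succ k ih =>
    rw [Finset.sum_range_succ' (fun j => q ^ j * auxTarget q (m + 2) (k + 1 - j)) (k + 1)]
    have hre : ∀ i, q ^ (i + 1) * auxTarget q (m + 2) (k + 1 - (i + 1))
        = q * (q ^ i * auxTarget q (m + 2) (k - i)) := by
      intro i
      rw [Nat.succ_sub_succ]
      ring
    rw [Finset.sum_congr rfl fun i _ => hre i, ← Finset.mul_sum, ih]
    have hq1 : 1 ≤ q := by omega
    have e1 : q ^ ((m + 2) * k) ≤ q ^ ((m + 2) * (k + 1)) :=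
      Nat.pow_le_pow_right hq1 (by nlinarith)
    have e2 : q ^ ((m + 2) * (k + 1)) ≤ q ^ ((m + 2) * (k + 2)) :=
      Nat.pow_le_pow_right hq1 (by nlinarith)
    have e3 : 1 ≤ q ^ (m + 2) := Nat.one_le_pow _ _ (by omega)
    have e4 : 1 ≤ q ^ (m + 1) := Nat.one_le_pow _ _ (by omega)
    show q * (q ^ ((m + 2) * (k + 1)) - q ^ ((m + 2) * k))
        + q ^ 0 * auxTarget q (m + 2) (k + 1 - 0) = _
    simp only [Nat.sub_zero, pow_zero, one_mul, auxTarget]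
    have hsub : m + 2 - 1 = m + 1 := by omega
    rw [hsub]
    zify [e1, e2, e3, e4]
    ring

theorem aux_main {F : Type*} [Field F] [Fintype F] [DecidableEq F] (q n : ℕ)
    (hq : Fintype.card F = q) (hn : 2 ≤ n) (k : ℕ) :
    Nat.card {B : Fin n → F[X] // (∀ d : F[X], (∀ i, d ∣ B i) → IsUnit d) ∧
        (Finset.univ.sup fun i => (B i).degree) = (k : WithBot ℕ)}
      = auxTarget q n k := by
  have hq2 : 2 ≤ q := hq ▸ Fintype.one_lt_card
  induction k using Nat.strong_induction_on with
  | _ k ih =>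
    have hrec := aux_recur q n hq (by omega) k
    rw [← aux_sum_target q n hq2 hn k] at hrec
    rw [Finset.sum_range_succ' (fun j => q ^ j * auxTarget q n (k - j)) k,
      Finset.sum_range_succ' (fun j => q ^ j *
        Nat.card {B : Fin n → F[X] // (∀ d : F[X], (∀ i, d ∣ B i) → IsUnit d) ∧
          (Finset.univ.sup fun i => (B i).degree) = ((k - j : ℕ) : WithBot ℕ)}) k] at hrec
    have htail : ∀ i ∈ Finset.range k, q ^ (i + 1) *
        Nat.card {B : Fin n → F[X] // (∀ d : F[X], (∀ i, d ∣ B i) → IsUnit d) ∧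
          (Finset.univ.sup fun i => (B i).degree) = ((k - (i + 1) : ℕ) : WithBot ℕ)}
        = q ^ (i + 1) * auxTarget q n (k - (i + 1)) := by
      intro i hi
      rw [ih _ (Nat.sub_lt (lt_of_le_of_lt (Nat.zero_le i) (Finset.mem_range.mp hi))
        (Nat.succ_pos i))]
    rw [Finset.sum_congr rfl htail] at hrec
    have := Nat.add_left_cancel hrec.symm
    simpa using this

theorem card_coprime_tuples_of_max_degree {F : Type*} [Field F] [Fintype F] (q n k : ℕ)
    (hq : Fintype.card F = q) (hn : 2 ≤ n) :
    Nat.card {A : Fin n → Polynomial F //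
      (∀ d : Polynomial F, (∀ i, d ∣ A i) → IsUnit d) ∧
      (Finset.univ.sup fun i => (A i).degree) = (k : WithBot ℕ)} =
      if k = 0 then q ^ n - 1
      else q ^ (n * k - n + 1) * ((q ^ n - 1) * (q ^ (n - 1) - 1)) := by
  letI := Classical.decEq F
  rw [aux_main q n hq hn k]
  cases k with
  | zero => simp [auxTarget]
  | succ k' =>
    have hexp : n * (k' + 1) - n + 1 = n * k' + 1 := by
      have hm : n * (k' + 1) = n * k' + n := by ring
      omega
    simp [auxTarget, hexp]
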